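/- Let G be a finite connected bridgeless graph with diameter d(G)=4 and maximum edge girth g*(G)=9. Then G admits a strong orientation whose diameter is at most 12; in particular, the oriented diameter of G is at most 12. -/

import Mathlib

/-- A multigraph: vertices `V`, edges `E`, each edge has two distinct endpoints. -/
structure Multigraph (V : Type*) (E : Type*) where
  ends : E → Sym2 V
  loopless : ∀ e, ¬ (ends e).IsDiag

namespace Multigraph

variable {V E : Type*}

/-- Adjacency in a multigraph: some edge joins `x` and `y`. -/
def Adjm (G : Multigraph V E) (x y : V) : Prop := ∃ e, G.ends e = s(x, y)

/-- The underlying simple graph of a multigraph. -/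
def toSimple (G : Multigraph V E) : SimpleGraph V where
  Adj x y := x ≠ y ∧ G.Adjm x y
  symm := by
    constructor
    rintro x y ⟨hne, e, he⟩
    exact ⟨hne.symm, e, he.trans (Sym2.eq_swap)⟩
  loopless := by constructor; rintro x ⟨hne, -⟩; exact hne rfl

/-- Distance between two vertices (length of a shortest path). -/
noncomputable def dist (G : Multigraph V E) (x y : V) : ℕ := G.toSimple.dist x y

/-- The diameter of a multigraph. -/
noncomputable def diam (G : Multigraph V E) : ℕ := sSup {n | ∃ x y, G.dist x y = n}

/-- The multigraph obtained by deleting the edge `e₀`. -/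
def deleteEdge (G : Multigraph V E) (e₀ : E) : Multigraph V {e : E // e ≠ e₀} where
  ends e := G.ends e.1
  loopless e := G.loopless e.1

/-- A (connected) multigraph is bridgeless if deleting any single edge leaves it connected. -/
def Bridgeless (G : Multigraph V E) : Prop :=
  ∀ e : E, ((G.deleteEdge e).toSimple).Connected

/-- Walks in a multigraph, recording the edges used. -/
inductive Walk (G : Multigraph V E) : V → V → Type _
  | nil {v : V} : Walk G v v
  | cons {x y z : V} (e : E) (he : G.ends e = s(x, y)) (p : Walk G y z) : Walk G x z

namespace Walk

variable {G : Multigraph V E}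

/-- The length (number of edges) of a walk. -/
def length : ∀ {x y : V}, G.Walk x y → ℕ
  | _, _, .nil => 0
  | _, _, .cons _ _ p => p.length + 1

/-- The list of edges of a walk. -/
def edges : ∀ {x y : V}, G.Walk x y → List E
  | _, _, .nil => []
  | _, _, .cons e _ p => e :: p.edges

/-- The list of vertices of a walk. -/
def support : ∀ {x y : V}, G.Walk x y → List V
  | x, _, .nil => [x]
  | x, _, .cons _ _ p => x :: p.support

/-- A closed walk is a cycle if its edges are distinct and its vertices
(other than the repeated base point) are distinct. -/
def IsCycle {v : V} (p : G.Walk v v) : Prop :=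
  p.edges.Nodup ∧ p.support.tail.Nodup ∧ 0 < p.length

end Walk

/-- The edge girth of `e`: the length of a shortest cycle containing `e`. -/
noncomputable def edgeGirth (G : Multigraph V E) (e : E) : ℕ :=
  sInf {n | ∃ (v : V) (p : G.Walk v v), p.IsCycle ∧ e ∈ p.edges ∧ p.length = n}

/-- The maximum edge girth `g*(G)`. -/
noncomputable def maxEdgeGirth (G : Multigraph V E) : ℕ :=
  sSup (Set.range fun e => G.edgeGirth e)

/-- An orientation of a multigraph: each edge is assigned a direction. -/
structure Orientation (G : Multigraph V E) where
  dir : E → V × V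
  compat : ∀ e, s((dir e).1, (dir e).2) = G.ends e

/-- Arcs of an orientation. -/
def Orientation.DAdj {G : Multigraph V E} (o : G.Orientation) (x y : V) : Prop :=
  ∃ e, o.dir e = (x, y)

/-- Directed distance in an orientation (`⊤` if unreachable). -/
noncomputable def Orientation.ddist {G : Multigraph V E} (o : G.Orientation) (x y : V) : ℕ∞ :=
  sInf {n : ℕ∞ | ∃ l : List V, List.Chain o.DAdj x l ∧
    (x :: l).getLast (List.cons_ne_nil x l) = y ∧ (l.length : ℕ∞) = n}

/-- An orientation is strong if every vertex is reachable from every vertex by a directed path. -/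
def Orientation.IsStrong {G : Multigraph V E} (o : G.Orientation) : Prop :=
  ∀ x y : V, o.ddist x y ≠ ⊤

/-- The diameter of an orientation. -/
noncomputable def Orientation.odiam {G : Multigraph V E} (o : G.Orientation) : ℕ∞ :=
  ⨆ (x : V) (y : V), o.ddist x y

end Multigraph

section Aux

open Multigraph

variable {V E : Type*} {G : Multigraph V E}

namespace Multigraph.Walk

/-- Append two walks. -/
def append : ∀ {x y z : V}, G.Walk x y → G.Walk y z → G.Walk x z
  | _, _, _, .nil, q => q
  | _, _, _, .cons e he p, q => .cons e he (p.append q)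

@[simp] lemma length_append {x y z : V} (p : G.Walk x y) (q : G.Walk y z) :
    (p.append q).length = p.length + q.length := by
  induction p with
  | nil => simp [append, length]
  | cons e he p ih => simp [append, length, ih]; omega

@[simp] lemma edges_append {x y z : V} (p : G.Walk x y) (q : G.Walk y z) :
    (p.append q).edges = p.edges ++ q.edges := by
  induction p with
  | nil => simp [append, edges]
  | cons e he p ih => simp [append, edges, ih]

lemma start_mem_support {x y : V} (p : G.Walk x y) : x ∈ p.support := by
  cases p <;> simp [support]

lemma mem_support_of_edge {x y : V} (p : G.Walk x y) {e : E} {a b : V}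
    (hm : e ∈ p.edges) (hab : G.ends e = s(a, b)) : a ∈ p.support := by
  induction p with
  | nil => simp [edges] at hm
  | cons f hf p ih =>
    simp only [edges, List.mem_cons] at hm
    rcases hm with rfl | hm
    · rw [hf] at hab
      rcases Sym2.eq_iff.mp hab.symm with ⟨rfl, rfl⟩ | ⟨rfl, rfl⟩
      · simp [support]
      · simp only [support, List.mem_cons]
        exact Or.inr (start_mem_support p)
    · simp only [support, List.mem_cons]
      exact Or.inr (ih hm)

lemma edges_nodup_of_support_nodup {x y : V} (p : G.Walk x y)
    (hnd : p.support.Nodup) : p.edges.Nodup := by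
  induction p with
  | nil => simp [edges]
  | cons f hf p ih =>
    simp only [support, List.nodup_cons] at hnd
    simp only [edges, List.nodup_cons]
    exact ⟨fun hmem => hnd.1 (mem_support_of_edge p hmem hf), ih hnd.2⟩

/-- Split a walk at an occurrence of an edge. -/
lemma split_at_edge {u w : V} (p : G.Walk u w) {e : E} (hm : e ∈ p.edges) :
    ∃ (x y : V) (q : G.Walk u x) (r : G.Walk y w),
      G.ends e = s(x, y) ∧ p.edges = q.edges ++ e :: r.edges ∧
      p.length = q.length + r.length + 1 := by
  induction p with
  | nil => simp [edges] at hm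
  | cons f hf p ih =>
    simp only [edges, List.mem_cons] at hm
    rcases hm with rfl | hm
    · exact ⟨_, _, .nil, p, hf, by simp [edges], by simp [length]⟩
    · obtain ⟨x, y, q, r, hxy, hed, hlen⟩ := ih hm
      exact ⟨x, y, .cons f hf q, r, hxy, by simp [edges, hed],
        by simp [length, hlen]; omega⟩

/-- Split a walk at a given length. -/
lemma split_at_length {u w : V} (p : G.Walk u w) (j : ℕ) (hj : j ≤ p.length) :
    ∃ (c : V) (q : G.Walk u c) (r : G.Walk c w),
      q.length = j ∧ r.length = p.length - j ∧ p.edges = q.edges ++ r.edges := by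
  induction p generalizing j with
  | nil =>
    simp only [length, Nat.le_zero] at hj
    exact hj ▸ ⟨_, .nil, .nil, rfl, by simp [length], by simp [edges]⟩
  | cons f hf p ih =>
    match j with
    | 0 => exact ⟨_, .nil, .cons f hf p, rfl, by simp [length], by simp [edges]⟩
    | (j+1) =>
      simp only [length] at hj
      obtain ⟨c, q, r, h1, h2, h3⟩ := ih j (by omega)
      exact ⟨c, .cons f hf q, r, by simp [length, h1], by simp [length]; omega,
        by simp [edges, h3]⟩

end Multigraph.Walk


namespace Multigraph

/-- Distance in the graph with `e₀` deleted. -/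
noncomputable def dH (G : Multigraph V E) (e₀ : E) (a b : V) : ℕ :=
  ((G.deleteEdge e₀).toSimple).dist a b

lemma dH_comm (G : Multigraph V E) (e₀ : E) (a b : V) : G.dH e₀ a b = G.dH e₀ b a :=
  SimpleGraph.dist_comm

lemma dH_self (G : Multigraph V E) (e₀ : E) (a : V) : G.dH e₀ a a = 0 :=
  SimpleGraph.dist_self

lemma dH_triangle {G : Multigraph V E} {e₀ : E}
    (Hconn : ((G.deleteEdge e₀).toSimple).Connected) (a b c : V) :
    G.dH e₀ a c ≤ G.dH e₀ a b + G.dH e₀ b c :=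
  Hconn.dist_triangle

lemma ne_of_ends_eq {G : Multigraph V E} {e : E} {a b : V} (he : G.ends e = s(a, b)) :
    a ≠ b := by
  intro h
  exact G.loopless e (by rw [he, Sym2.mk_isDiag_iff]; exact h.symm ▸ rfl)

lemma dH_le_one {G : Multigraph V E} {e₀ : E} {e : E} (hne : e ≠ e₀) {a b : V}
    (he : G.ends e = s(a, b)) : G.dH e₀ a b ≤ 1 := by
  have hadj : ((G.deleteEdge e₀).toSimple).Adj a b := ⟨ne_of_ends_eq he, ⟨e, hne⟩, he⟩
  simpa [dH] using SimpleGraph.dist_le (SimpleGraph.Walk.cons hadj SimpleGraph.Walk.nil)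

/-- A multigraph walk avoiding `e₀` bounds the deleted distance. -/
lemma dH_le_length {G : Multigraph V E} {e₀ : E}
    (Hconn : ((G.deleteEdge e₀).toSimple).Connected) {x y : V}
    (W : G.Walk x y) (hW : e₀ ∉ W.edges) : G.dH e₀ x y ≤ W.length := by
  induction W with
  | nil => simp [dH_self, Walk.length]
  | @cons a c b e he p ih =>
    simp only [Walk.edges, List.mem_cons, not_or] at hW
    have h1 : G.dH e₀ a c ≤ 1 := dH_le_one (fun h => hW.1 h.symm) he
    have h2 : G.dH e₀ c b ≤ p.length := ih hW.2
    have h3 : G.dH e₀ a b ≤ G.dH e₀ a c + G.dH e₀ c b := dH_triangle Hconn _ _ _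
    have h4 : (Walk.cons e he p).length = p.length + 1 := rfl
    omega

/-- A multigraph walk bounds the simple distance. -/
lemma dist_le_length {G : Multigraph V E}
    (hconn : G.toSimple.Connected) {x y : V} (W : G.Walk x y) :
    G.toSimple.dist x y ≤ W.length := by
  induction W with
  | nil => simp [SimpleGraph.dist_self, Walk.length]
  | @cons a c b e he p ih =>
    have hadj : G.toSimple.Adj a c := ⟨ne_of_ends_eq he, e, he⟩
    have h1 : G.toSimple.dist a c ≤ 1 :=
      by simpa using SimpleGraph.dist_le (SimpleGraph.Walk.cons hadj SimpleGraph.Walk.nil)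
    have h3 : G.toSimple.dist a b ≤ G.toSimple.dist a c + G.toSimple.dist c b :=
      hconn.dist_triangle
    have h4 : (Walk.cons e he p).length = p.length + 1 := rfl
    omega

/-- Lift a simple walk to a multigraph walk. -/
lemma exists_walk_of_simple {G : Multigraph V E} {x y : V} (p : G.toSimple.Walk x y) :
    ∃ W : G.Walk x y, W.length = p.length := by
  induction p with
  | nil => exact ⟨.nil, rfl⟩
  | @cons a b c h p ih =>
    obtain ⟨e, he⟩ := h.2
    obtain ⟨W, hW⟩ := ih
    exact ⟨.cons e he W, by simp [Walk.length, hW]⟩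

/-- Lift a simple walk in the deleted graph to a multigraph walk avoiding `e₀`. -/
lemma exists_walk_of_deleteSimple {G : Multigraph V E} {e₀ : E} {x y : V}
    (p : ((G.deleteEdge e₀).toSimple).Walk x y) :
    ∃ W : G.Walk x y, W.length = p.length ∧ e₀ ∉ W.edges ∧ W.support = p.support := by
  induction p with
  | nil => exact ⟨.nil, rfl, by simp [Walk.edges], by simp [Walk.support]⟩
  | @cons a b c h p ih =>
    obtain ⟨e, he⟩ := h.2
    obtain ⟨W, h1, h2, h3⟩ := ih
    refine ⟨.cons e.1 he W, by simp [Walk.length, h1], ?_, by simp [Walk.support, h3]⟩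
    simp only [Walk.edges, List.mem_cons, not_or]
    exact ⟨Ne.symm e.2, h2⟩

/-- Girth lower bound: if every cycle through `e₀` has length ≥ 9 then the
deleted distance between the endpoints of `e₀` is at least 8. -/
lemma eight_le_dH {G : Multigraph V E} {e₀ : E} {y0 y8 : V}
    (he₀ : G.ends e₀ = s(y8, y0))
    (Hconn : ((G.deleteEdge e₀).toSimple).Connected)
    (h9 : G.edgeGirth e₀ = 9) : 8 ≤ G.dH e₀ y0 y8 := by
  obtain ⟨p, hp, hlen⟩ := (Hconn y0 y8).exists_path_of_dist
  obtain ⟨W, h1, h2, h3⟩ := exists_walk_of_deleteSimple (G := G) (e₀ := e₀) p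
  set C : G.Walk y8 y8 := Walk.cons e₀ he₀ W with hC
  have hcyc : C.IsCycle := by
    refine ⟨?_, ?_, by simp [hC, Walk.length]⟩
    · simp only [hC, Walk.edges, List.nodup_cons]
      refine ⟨h2, Walk.edges_nodup_of_support_nodup W ?_⟩
      rw [h3]; exact hp.support_nodup
    · simp only [hC, Walk.support, List.tail_cons]
      rw [h3]; exact hp.support_nodup
  have hmem : C.length ∈ {n | ∃ (v : V) (q : G.Walk v v),
      q.IsCycle ∧ e₀ ∈ q.edges ∧ q.length = n} :=
    ⟨y8, C, hcyc, by simp [hC, Walk.edges], rfl⟩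
  have h9le : 9 ≤ C.length := h9 ▸ Nat.sInf_le hmem
  have : C.length = W.length + 1 := by simp [hC, Walk.length]
  rw [this, h1, hlen] at h9le
  have hdef : G.dH e₀ y0 y8 = ((G.deleteEdge e₀).toSimple).dist y0 y8 := rfl
  omega

end Multigraph


namespace Multigraph

section LB

variable {G : Multigraph V E} {e₀ : E} {y0 y8 : V}

/-- Lower bound for arbitrary multigraph walks in terms of deleted distances. -/
lemma walk_lb (he₀ : G.ends e₀ = s(y8, y0))
    (Hconn : ((G.deleteEdge e₀).toSimple).Connected)
    (hd8 : G.dH e₀ y0 y8 = 8) :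
    ∀ {a b : V} (W : G.Walk a b),
      min (G.dH e₀ a b)
        (min (G.dH e₀ a y0 + 1 + G.dH e₀ y8 b) (G.dH e₀ a y8 + 1 + G.dH e₀ y0 b))
      ≤ W.length := by
  intro a b W
  have h00 : G.dH e₀ y0 y0 = 0 := dH_self G e₀ y0
  have h88 : G.dH e₀ y8 y8 = 0 := dH_self G e₀ y8
  have h80 : G.dH e₀ y8 y0 = 8 := (dH_comm G e₀ y8 y0).trans hd8
  induction W with
  | @nil v =>
    have h0 : G.dH e₀ v v = 0 := dH_self G e₀ v
    have hlen : (Walk.nil : G.Walk v v).length = 0 := rfl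
    omega
  | @cons a c b e he p ih =>
    have hlen : (Walk.cons e he p).length = p.length + 1 := rfl
    by_cases hee : e = e₀
    · rw [hee] at he
      have : s(y8, y0) = s(a, c) := he₀.symm.trans he
      rcases Sym2.eq_iff.mp this with ⟨rfl, rfl⟩ | ⟨rfl, rfl⟩
      · -- a = y8, c = y0
        have c1 : G.dH e₀ a b ≤ G.dH e₀ a y0 + G.dH e₀ y0 b := dH_triangle Hconn _ _ _
        have c2 : G.dH e₀ y8 b = G.dH e₀ b y8 := dH_comm G e₀ _ _
        have c3 : G.dH e₀ y0 b = G.dH e₀ b y0 := dH_comm G e₀ _ _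
        omega
      · -- a = y0, c = y8
        have c2 : G.dH e₀ y8 b = G.dH e₀ b y8 := dH_comm G e₀ _ _
        have c3 : G.dH e₀ y0 b = G.dH e₀ b y0 := dH_comm G e₀ _ _
        omega
    · have hac : G.dH e₀ a c ≤ 1 := dH_le_one hee he
      have t1 : G.dH e₀ a b ≤ G.dH e₀ a c + G.dH e₀ c b := dH_triangle Hconn _ _ _
      have t2 : G.dH e₀ a y0 ≤ G.dH e₀ a c + G.dH e₀ c y0 := dH_triangle Hconn _ _ _
      have t3 : G.dH e₀ a y8 ≤ G.dH e₀ a c + G.dH e₀ c y8 := dH_triangle Hconn _ _ _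
      omega

/-- Lower bound for multigraph walks through `e₀`. -/
lemma walk_lb_e0 (he₀ : G.ends e₀ = s(y8, y0))
    (Hconn : ((G.deleteEdge e₀).toSimple).Connected)
    (hd8 : G.dH e₀ y0 y8 = 8) :
    ∀ {a b : V} (W : G.Walk a b), e₀ ∈ W.edges →
      min (G.dH e₀ a y0 + 1 + G.dH e₀ y8 b)
        (min (G.dH e₀ a y8 + 1 + G.dH e₀ y0 b) (G.dH e₀ a b + 2))
      ≤ W.length := by
  intro a b W
  have h00 : G.dH e₀ y0 y0 = 0 := dH_self G e₀ y0
  have h88 : G.dH e₀ y8 y8 = 0 := dH_self G e₀ y8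
  have h80 : G.dH e₀ y8 y0 = 8 := (dH_comm G e₀ y8 y0).trans hd8
  induction W with
  | nil => intro hmem; exact absurd hmem (by simp [Walk.edges])
  | @cons a c b e he p ih =>
    intro hmem
    have hlen : (Walk.cons e he p).length = p.length + 1 := rfl
    simp only [Walk.edges, List.mem_cons] at hmem
    by_cases hee : e = e₀
    · rw [hee] at he
      have : s(y8, y0) = s(a, c) := he₀.symm.trans he
      by_cases hp : e₀ ∈ p.edges
      · have ihp := ih hp
        rcases Sym2.eq_iff.mp this with ⟨rfl, rfl⟩ | ⟨rfl, rfl⟩ <;> omega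
      · have hdcb : G.dH e₀ _ b ≤ p.length := dH_le_length Hconn p hp
        rcases Sym2.eq_iff.mp this with ⟨rfl, rfl⟩ | ⟨rfl, rfl⟩ <;> omega
    · have hp : e₀ ∈ p.edges := by
        rcases hmem with h | h
        · exact absurd h.symm hee
        · exact h
      have ihp := ih hp
      have hac : G.dH e₀ a c ≤ 1 := dH_le_one hee he
      have t1 : G.dH e₀ a b ≤ G.dH e₀ a c + G.dH e₀ c b := dH_triangle Hconn _ _ _
      have t2 : G.dH e₀ a y0 ≤ G.dH e₀ a c + G.dH e₀ c y0 := dH_triangle Hconn _ _ _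
      have t3 : G.dH e₀ a y8 ≤ G.dH e₀ a c + G.dH e₀ c y8 := dH_triangle Hconn _ _ _
      omega

end LB

section Orient

variable (G : Multigraph V E) (e₀ : E) (y0 : V)

open scoped Classical in
/-- Orient each edge from the endpoint closer to `y0` (in the deleted graph) to the
farther one; an edge between levels `8` and `0` is oriented from level `8` to level `0`. -/
noncomputable def levelOrient : G.Orientation where
  dir e :=
    let p := (G.ends e).out
    if G.dH e₀ y0 p.1 + 1 = G.dH e₀ y0 p.2 ∨ (G.dH e₀ y0 p.1 = 8 ∧ G.dH e₀ y0 p.2 = 0)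
      then p else p.swap
  compat e := by
    dsimp only
    split
    · exact Quot.out_eq _
    · rw [Prod.fst_swap, Prod.snd_swap, Sym2.eq_swap]
      exact Quot.out_eq _

variable {G e₀ y0}

lemma levelOrient_dir_asc {e : E} {a c : V} (he : G.ends e = s(a, c))
    (h1 : G.dH e₀ y0 c = G.dH e₀ y0 a + 1) :
    (levelOrient G e₀ y0).dir e = (a, c) := by
  have hout : s(((G.ends e).out).1, ((G.ends e).out).2) = s(a, c) := by
    rw [← he]; exact Quot.out_eq _
  show (if _ then _ else _) = _
  rcases Sym2.eq_iff.mp hout with ⟨hx, hy⟩ | ⟨hx, hy⟩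
  · rw [if_pos]
    · rw [← hx, ← hy, Prod.mk.eta]
    · left; rw [hx, hy]; omega
  · rw [if_neg]
    · exact Prod.ext (by rw [Prod.fst_swap, hy]) (by rw [Prod.snd_swap, hx])
    · rw [hx, hy]
      rintro (h | ⟨h8, h0⟩) <;> omega

lemma levelOrient_dir_e0 {y8 : V} (he₀ : G.ends e₀ = s(y8, y0))
    (h8 : G.dH e₀ y0 y8 = 8) (h0 : G.dH e₀ y0 y0 = 0) :
    (levelOrient G e₀ y0).dir e₀ = (y8, y0) := by
  have hout : s(((G.ends e₀).out).1, ((G.ends e₀).out).2) = s(y8, y0) := by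
    rw [← he₀]; exact Quot.out_eq _
  show (if _ then _ else _) = _
  rcases Sym2.eq_iff.mp hout with ⟨hx, hy⟩ | ⟨hx, hy⟩
  · rw [if_pos]
    · rw [← hx, ← hy, Prod.mk.eta]
    · right; rw [hx, hy]; omega
  · rw [if_neg]
    · exact Prod.ext (by rw [Prod.fst_swap, hy]) (by rw [Prod.snd_swap, hx])
    · rw [hx, hy]
      rintro (h | ⟨ha, hb⟩) <;> omega

end Orient

section Reach

variable {G : Multigraph V E} (o : G.Orientation)

/-- There is a directed walk from `x` to `y` of length at most `B`. -/
def DReach (B : ℕ) (x y : V) : Prop :=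
  ∃ l : List V, List.Chain o.DAdj x l ∧
    (x :: l).getLast (List.cons_ne_nil x l) = y ∧ l.length ≤ B

variable {o}

lemma DReach.refl (B : ℕ) (x : V) : DReach o B x x :=
  ⟨[], List.Chain.nil, rfl, Nat.zero_le B⟩

lemma DReach.head {B : ℕ} {x y z : V} (h : o.DAdj x y) (hr : DReach o B y z) :
    DReach o (B + 1) x z := by
  obtain ⟨l, hc, hl, hb⟩ := hr
  exact ⟨y :: l, List.chain_cons.mpr ⟨h, hc⟩,
    by rw [List.getLast_cons (List.cons_ne_nil y l)]; exact hl,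
    by simpa using Nat.add_le_add_right hb 1⟩

lemma chain_glue {R : V → V → Prop} :
    ∀ (l₁ : List V) (x y : V) (l₂ : List V), List.Chain R x l₁ →
      (x :: l₁).getLast (List.cons_ne_nil x l₁) = y → List.Chain R y l₂ →
      List.Chain R x (l₁ ++ l₂) ∧
        (x :: (l₁ ++ l₂)).getLast (List.cons_ne_nil _ _) =
          (y :: l₂).getLast (List.cons_ne_nil y l₂) := by
  intro l₁
  induction l₁ with
  | nil =>
    intro x y l₂ _ hlast hc₂
    simp only [List.getLast_singleton] at hlast
    subst hlast
    exact ⟨hc₂, rfl⟩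
  | cons a t ih =>
    intro x y l₂ hc hlast hc₂
    replace hc := List.chain_cons.mp hc
    have hl : (x :: a :: t).getLast (List.cons_ne_nil _ _) =
        (a :: t).getLast (List.cons_ne_nil _ _) := List.getLast_cons (List.cons_ne_nil a t)
    obtain ⟨h1, h2⟩ := ih a y l₂ hc.2 (hl.symm.trans hlast) hc₂
    refine ⟨List.chain_cons.mpr ⟨hc.1, h1⟩, ?_⟩
    have h3 : (x :: a :: (t ++ l₂)).getLast (List.cons_ne_nil _ _) =
        (a :: (t ++ l₂)).getLast (List.cons_ne_nil _ _) := List.getLast_cons _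
    exact h3.trans h2

lemma DReach.trans {A B : ℕ} {x y z : V} (h₁ : DReach o A x y) (h₂ : DReach o B y z) :
    DReach o (A + B) x z := by
  obtain ⟨l₁, hc₁, hl₁, hb₁⟩ := h₁
  obtain ⟨l₂, hc₂, hl₂, hb₂⟩ := h₂
  obtain ⟨hc, hl⟩ := chain_glue l₁ x y l₂ hc₁ hl₁ hc₂
  exact ⟨l₁ ++ l₂, hc, hl.trans hl₂, by simpa using Nat.add_le_add hb₁ hb₂⟩

lemma DReach.single {x y : V} (h : o.DAdj x y) : DReach o 1 x y :=
  DReach.head h (DReach.refl 0 y)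

lemma DReach.mono {A B : ℕ} {x y : V} (h : DReach o A x y) (hab : A ≤ B) :
    DReach o B x y := by
  obtain ⟨l, hc, hl, hb⟩ := h
  exact ⟨l, hc, hl, hb.trans hab⟩

lemma DReach.ddist_le {B : ℕ} {x y : V} (h : DReach o B x y) :
    o.ddist x y ≤ (B : ℕ∞) := by
  obtain ⟨l, hc, hl, hb⟩ := h
  calc o.ddist x y ≤ (l.length : ℕ∞) := sInf_le ⟨l, hc, hl, rfl⟩
    _ ≤ (B : ℕ∞) := by exact_mod_cast hb

end Reach

end Multigraph

end Aux


open Multigraph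

/-- Let `G` be a finite connected bridgeless graph with diameter `4` and
maximum edge girth `g*(G) = 9`. Then `G` admits a strong orientation whose diameter is at
most `12`; in particular the oriented diameter of `G` is at most `12`. -/
theorem stmt2 {V E : Type*} [Fintype V] [Fintype E] (G : Multigraph V E)
    (hconn : G.toSimple.Connected) (hbridgeless : G.Bridgeless)
    (hdiam : G.diam = 4) (hg : G.maxEdgeGirth = 9) :
    ∃ o : G.Orientation, o.IsStrong ∧ o.odiam ≤ (12 : ℕ∞) := by
  classical
  -- all simple distances are at most 4
  have hdist4 : ∀ a b : V, G.toSimple.dist a b ≤ 4 := by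
    intro a b
    have hmem : G.toSimple.dist a b ∈ {n | ∃ u v, G.dist u v = n} := ⟨a, b, rfl⟩
    have hbdd : BddAbove {n | ∃ u v : V, G.dist u v = n} := by
      have hset : {n | ∃ u v : V, G.dist u v = n}
          = Set.range (fun p : V × V => G.dist p.1 p.2) := by
        ext n
        constructor
        · rintro ⟨u, v, h⟩; exact ⟨(u, v), h⟩
        · rintro ⟨⟨u, v⟩, h⟩; exact ⟨u, v, h⟩
      rw [hset]
      exact (Set.finite_range _).bddAbove
    have := le_csSup hbdd hmem
    rwa [show sSup {n | ∃ u v, G.dist u v = n} = G.diam from rfl, hdiam] at this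
  -- an edge of girth 9
  have hE : Nonempty E := by
    by_contra h
    rw [not_nonempty_iff] at h
    rw [maxEdgeGirth, Set.range_eq_empty _, csSup_empty] at hg
    exact absurd hg (by norm_num)
  have h9mem : 9 ∈ Set.range fun e => G.edgeGirth e := by
    rw [← hg, maxEdgeGirth]
    exact Nat.sSup_mem (Set.range_nonempty _) (Set.finite_range _).bddAbove
  obtain ⟨e₀, he9⟩ := h9mem
  -- a cycle of length 9 through e₀
  have hsetne : {n | ∃ (v : V) (p : G.Walk v v),
      p.IsCycle ∧ e₀ ∈ p.edges ∧ p.length = n}.Nonempty := by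
    by_contra h
    rw [Set.not_nonempty_iff_eq_empty] at h
    have he9' : sInf {n | ∃ (v : V) (p : G.Walk v v),
        p.IsCycle ∧ e₀ ∈ p.edges ∧ p.length = n} = 9 := he9
    rw [h, Nat.sInf_empty] at he9'
    exact absurd he9' (by norm_num)
  have h9set : 9 ∈ {n | ∃ (v : V) (p : G.Walk v v),
      p.IsCycle ∧ e₀ ∈ p.edges ∧ p.length = n} := by
    have he9' : sInf {n | ∃ (v : V) (p : G.Walk v v),
        p.IsCycle ∧ e₀ ∈ p.edges ∧ p.length = n} = 9 := he9
    rw [← he9']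
    exact Nat.sInf_mem hsetne
  obtain ⟨v, p, hcyc, hmem, hlen⟩ := h9set
  -- split the cycle at e₀ : ends e₀ = s(x, y); y plays "y0", x plays "y8"
  obtain ⟨x, y, q, r, hxy, hed, hlens⟩ := p.split_at_edge hmem
  have Hconn := hbridgeless e₀
  set W0 := r.append q with hW0
  have hW0len : W0.length = 8 := by
    rw [hlen] at hlens
    rw [hW0, Walk.length_append]
    omega
  have hW0e : e₀ ∉ W0.edges := by
    have hnd := hcyc.1
    rw [hed] at hnd
    have hd1 : e₀ ∉ q.edges := fun hq =>
      (List.disjoint_of_nodup_append hnd) hq List.mem_cons_self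
    have hd2 : e₀ ∉ r.edges :=
      (List.nodup_cons.mp (hnd.of_append_right)).1
    rw [hW0, Walk.edges_append]
    simp only [List.mem_append, not_or]
    exact ⟨hd2, hd1⟩
  -- dH y x = 8
  have hd8 : G.dH e₀ y x = 8 := by
    have hge : 8 ≤ G.dH e₀ y x := eight_le_dH hxy Hconn he9
    have hle : G.dH e₀ y x ≤ 8 := by
      have := dH_le_length Hconn W0 hW0e
      omega
    omega
  have h00 : G.dH e₀ y y = 0 := dH_self G e₀ y
  have h88 : G.dH e₀ x x = 0 := dH_self G e₀ x
  -- level vertices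
  have hlevel : ∀ j, j ≤ 8 → ∃ c, G.dH e₀ y c = j ∧ G.dH e₀ c x = 8 - j := by
    intro j hj
    obtain ⟨c, q1, r1, hq1, hr1, hedges⟩ := W0.split_at_length j (by omega)
    have hq1e : e₀ ∉ q1.edges := fun h =>
      hW0e (by rw [hedges]; exact List.mem_append.mpr (Or.inl h))
    have hr1e : e₀ ∉ r1.edges := fun h =>
      hW0e (by rw [hedges]; exact List.mem_append.mpr (Or.inr h))
    have h1 : G.dH e₀ y c ≤ j := by
      have := dH_le_length Hconn q1 hq1e; omega
    have h2 : G.dH e₀ c x ≤ 8 - j := by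
      have := dH_le_length Hconn r1 hr1e
      rw [hW0len] at hr1
      omega
    have h3 : 8 ≤ G.dH e₀ y c + G.dH e₀ c x := by
      have := dH_triangle Hconn y c x; omega
    exact ⟨c, by omega, by omega⟩
  -- lower bound on simple distances via deleted distances
  have dG_lb : ∀ a b : V,
      min (G.dH e₀ a b)
        (min (G.dH e₀ a y + 1 + G.dH e₀ x b) (G.dH e₀ a x + 1 + G.dH e₀ y b))
      ≤ G.toSimple.dist a b := by
    intro a b
    obtain ⟨pw, hpw⟩ := (hconn.preconnected a b).exists_walk_length_eq_dist
    obtain ⟨W, hWl⟩ := exists_walk_of_simple pw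
    have := walk_lb hxy Hconn hd8 W
    omega
  -- the fundamental identity m + n = 8
  have hmn : ∀ w : V, G.dH e₀ y w + G.dH e₀ w x = 8 := by
    intro w
    have hge : 8 ≤ G.dH e₀ y w + G.dH e₀ w x := by
      have := dH_triangle Hconn y w x; omega
    by_contra hne
    have cyw : G.dH e₀ w y = G.dH e₀ y w := dH_comm G e₀ w y
    have cxw : G.dH e₀ x w = G.dH e₀ w x := dH_comm G e₀ x w
    have cxy : G.dH e₀ x y = G.dH e₀ y x := dH_comm G e₀ x y
    have f1 := dG_lb w y
    have f2 := dG_lb w x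
    have hd4y := hdist4 w y
    have hd4x := hdist4 w x
    rcases Nat.lt_or_ge (G.dH e₀ y w) 5 with ha | ha
    · -- here dH w x ≥ 5 and dH y w ≤ 3
      obtain ⟨c, hc1, hc2⟩ := hlevel (13 - G.dH e₀ w x) (by omega)
      have f3 := dG_lb w c
      have hd4c := hdist4 w c
      have t1 := dH_triangle Hconn w c x
      have cxc : G.dH e₀ x c = G.dH e₀ c x := dH_comm G e₀ x c
      have t2 := dH_triangle Hconn y w x
      omega
    · -- here dH y w ≥ 5 and dH w x ≤ 3
      obtain ⟨c, hc1, hc2⟩ := hlevel (G.dH e₀ y w - 5) (by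
        have t3 := dH_triangle Hconn y x w
        omega)
      have f3 := dG_lb w c
      have hd4c := hdist4 w c
      have t1 := dH_triangle Hconn y c w
      have cxc : G.dH e₀ x c = G.dH e₀ c x := dH_comm G e₀ x c
      have ccw : G.dH e₀ c w = G.dH e₀ w c := dH_comm G e₀ c w
      have t3 := dH_triangle Hconn y x w
      omega
  -- the orientation
  set o := levelOrient G e₀ y with ho
  have arc_e0 : o.DAdj x y := ⟨e₀, levelOrient_dir_e0 hxy hd8 h00⟩
  have arc_asc : ∀ {e : E} {a c : V}, G.ends e = s(a, c) →
      G.dH e₀ y c = G.dH e₀ y a + 1 → o.DAdj a c := by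
    intro e a c he hasc
    exact ⟨e, levelOrient_dir_asc he hasc⟩
  -- OUT: a directed ascent to x
  have OUT : ∀ k w, G.dH e₀ w x = k → DReach o (8 - G.dH e₀ y w) w x := by
    intro k
    induction k using Nat.strong_induction_on with
    | _ k ih =>
      intro w hk
      rcases Nat.eq_zero_or_pos k with rfl | hpos
      · have hwx : w = x := Hconn.dist_eq_zero_iff.mp hk
        subst hwx
        exact DReach.refl _ _
      · obtain ⟨pw, hpw⟩ := (Hconn.preconnected w x).exists_walk_length_eq_dist
        have hpwl : pw.length = k := by rw [hpw]; exact hk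
        cases pw with
        | nil => simp at hpwl; omega
        | @cons _ u _ hadj pw' =>
          have hbu : G.dH e₀ u x = (G.deleteEdge e₀).toSimple.dist u x := rfl
          have hux : G.dH e₀ u x = k - 1 := by
            have hle := SimpleGraph.dist_le pw'
            simp only [SimpleGraph.Walk.length_cons] at hpwl
            have hge : k ≤ 1 + G.dH e₀ u x := by
              have htr := dH_triangle Hconn w u x
              have hbwu : G.dH e₀ w u = (G.deleteEdge e₀).toSimple.dist w u := rfl
              have hd1 : (G.deleteEdge e₀).toSimple.dist w u ≤ 1 := by
                simpa using SimpleGraph.dist_le (SimpleGraph.Walk.cons hadj SimpleGraph.Walk.nil)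
              omega
            omega
          have hmw := hmn w
          have hmu := hmn u
          have hasc : G.dH e₀ y u = G.dH e₀ y w + 1 := by omega
          obtain ⟨e, he⟩ := hadj.2
          have harc : o.DAdj w u := arc_asc he hasc
          exact (DReach.head harc (ih (k - 1) (by omega) u hux)).mono (by omega)
  -- IN: directed descents from every level below t
  have IN : ∀ k t, G.dH e₀ y t = k → ∀ μ, μ ≤ k →
      ∃ z, G.dH e₀ y z = μ ∧ DReach o (k - μ) z t := by
    intro k
    induction k using Nat.strong_induction_on with
    | _ k ih =>
      intro t hk μ hμ
      rcases Nat.eq_or_lt_of_le hμ with heq | hlt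
      · exact ⟨t, by omega, DReach.refl _ _⟩
      · have hk' : G.dH e₀ t y = k := (dH_comm G e₀ t y).trans hk
        obtain ⟨pw, hpw⟩ := (Hconn.preconnected t y).exists_walk_length_eq_dist
        have hpwl : pw.length = k := by rw [hpw]; exact hk'
        cases pw with
        | nil =>
          simp at hpwl
          omega
        | @cons _ u _ hadj pw' =>
          have hbu : G.dH e₀ u y = (G.deleteEdge e₀).toSimple.dist u y := rfl
          have hyu : G.dH e₀ y u = k - 1 := by
            have hle := SimpleGraph.dist_le pw'
            simp only [SimpleGraph.Walk.length_cons] at hpwl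
            have hcom : G.dH e₀ y u = G.dH e₀ u y := dH_comm G e₀ y u
            have hge : k ≤ G.dH e₀ y u + 1 := by
              have htr := dH_triangle Hconn y u t
              have hd1 : G.dH e₀ u t ≤ 1 := by
                have hbtu : G.dH e₀ t u = (G.deleteEdge e₀).toSimple.dist t u := rfl
                have h2 : (G.deleteEdge e₀).toSimple.dist t u ≤ 1 := by
                  simpa using
                    SimpleGraph.dist_le (SimpleGraph.Walk.cons hadj SimpleGraph.Walk.nil)
                have hcomtu : G.dH e₀ u t = G.dH e₀ t u := dH_comm G e₀ u t
                omega
              omega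
            omega
          obtain ⟨e, he⟩ := hadj.2
          have he' : G.ends e.1 = s(u, t) := he.trans Sym2.eq_swap
          have harc : o.DAdj u t := arc_asc he' (by omega)
          obtain ⟨z, hz, hrec⟩ := ih (k - 1) (by omega) u hyu μ (by omega)
          exact ⟨z, hz, (hrec.trans (DReach.single harc)).mono (by omega)⟩
  -- monotone climbs along e₀-free walks
  have climb : ∀ {a b : V} (W : G.Walk a b), e₀ ∉ W.edges →
      G.dH e₀ y b = G.dH e₀ y a + W.length → DReach o W.length a b := by
    intro a b W
    induction W with
    | nil => intro _ _; exact DReach.refl _ _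
    | @cons a c b e he pw ihp =>
      intro hne hcl
      simp only [Walk.edges, List.mem_cons, not_or] at hne
      have h1 : G.dH e₀ a c ≤ 1 := dH_le_one (fun h => hne.1 h.symm) he
      have h2 : G.dH e₀ c b ≤ pw.length := dH_le_length Hconn pw hne.2
      have t1 := dH_triangle Hconn y a c
      have t2 := dH_triangle Hconn y c b
      have hLen : (Walk.cons e he pw).length = pw.length + 1 := rfl
      have hstep : G.dH e₀ y c = G.dH e₀ y a + 1 := by omega
      have harc : o.DAdj a c := arc_asc he hstep
      have hrest := ihp hne.2 (by omega)
      exact (DReach.head harc hrest).mono (by omega)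
  -- a directed 4-step ascent to any vertex four levels up
  have ASC4 : ∀ s z : V, G.dH e₀ y z = G.dH e₀ y s + 4 → DReach o 4 s z := by
    intro s z hz
    have hd := hdist4 s z
    obtain ⟨pw, hpw⟩ := (hconn.preconnected s z).exists_walk_length_eq_dist
    obtain ⟨W, hWl⟩ := exists_walk_of_simple pw
    have hWlen : W.length ≤ 4 := by omega
    have hmns := hmn s
    have hmnz := hmn z
    have csy : G.dH e₀ s y = G.dH e₀ y s := dH_comm G e₀ s y
    have cxz : G.dH e₀ x z = G.dH e₀ z x := dH_comm G e₀ x z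
    have tri := dH_triangle Hconn y s z
    have lb := walk_lb hxy Hconn hd8 W
    have hWe : e₀ ∉ W.edges := by
      intro hmemW
      have lb0 := walk_lb_e0 hxy Hconn hd8 W hmemW
      omega
    have hlen4 : W.length = 4 := by omega
    have := climb W hWe (by omega)
    rwa [hlen4] at this
  -- assembling: every directed distance is at most 12
  have FINAL : ∀ s t : V, DReach o 12 s t := by
    intro s t
    have hms := hmn s
    have hmt := hmn t
    rcases Nat.lt_or_ge (G.dH e₀ y t) (G.dH e₀ y s + 4) with hk | hk
    · -- route through x, e₀, y
      have r1 : DReach o (8 - G.dH e₀ y s) s x := OUT _ s rfl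
      obtain ⟨z, hz, r3⟩ := IN (G.dH e₀ y t) t rfl 0 (Nat.zero_le _)
      have hzy : y = z := Hconn.dist_eq_zero_iff.mp hz
      subst hzy
      have r2 : DReach o 1 x y := DReach.single arc_e0
      exact ((r1.trans r2).trans r3).mono (by omega)
    · obtain ⟨z, hz, r2⟩ := IN (G.dH e₀ y t) t rfl (G.dH e₀ y s + 4) hk
      have r1 : DReach o 4 s z := ASC4 s z (by omega)
      exact (r1.trans r2).mono (by omega)
  refine ⟨o, ?_, ?_⟩
  · intro a b h
    have h12 := (FINAL a b).ddist_le
    rw [h] at h12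
    exact absurd h12 (by
      simp only [top_le_iff]
      exact fun hcontr => by
        have : ((12 : ℕ) : ℕ∞) ≠ ⊤ := ENat.coe_ne_top 12
        exact this hcontr)
  · refine iSup₂_le fun a b => ?_
    have h12 := (FINAL a b).ddist_le
    exact h12.trans (by norm_num)
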